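/- In the shuffle algebra for d = 0 (quiver with one vertex and no loops), the product ψ_{2i_1+1}·ψ_{2i_2+1}·...·ψ_{2i_n+1} of the one-variable generators ψ_{2i+1} = x^i (with 0 ≤ i_1 < i_2 < ... < i_n) equals the Schur polynomial s_λ(x_1,...,x_n) where λ = (i_n + 1 - n, i_{n-1} + 2 - n, ..., i_1). -/

import Mathlib

/- STATEMENT 2: in the shuffle algebra for d = 0, the product
   ψ_{2i_1+1}·…·ψ_{2i_n+1} of one-variable generators ψ_{2i+1} = x^i (with
   i_1 < … < i_n) equals the Schur polynomial s_λ, λ = (i_n+1-n, …, i_1).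
   We use the bialternant form of the Schur polynomial:
   s_λ(x_1,…,x_n) = det(x_a^{i_b}) / ∏_{a<b}(x_b - x_a), stated here in the
   denominator-free form (product against the Vandermonde). -/

namespace Stmt2

noncomputable section

lemma compl_card {n m : ℕ} (S : Finset (Fin (n + m))) (hS : S.card = n) :
    Sᶜ.card = m := by
  rw [Finset.card_compl, hS, Fintype.card_fin]
  omega

def shuffleMul (d : ℕ) {n m : ℕ} (f1 : (Fin n → ℚ) → ℚ) (f2 : (Fin m → ℚ) → ℚ) :
    (Fin (n + m) → ℚ) → ℚ := fun x =>
  ∑ S ∈ (Finset.powersetCard n (Finset.univ : Finset (Fin (n + m)))).attach,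
    f1 (fun a => x (S.1.orderEmbOfFin ((Finset.mem_powersetCard.mp S.2).2) a)) *
      f2 (fun b => x ((S.1)ᶜ.orderEmbOfFin
        (compl_card S.1 ((Finset.mem_powersetCard.mp S.2).2)) b)) *
      ∏ a : Fin n, ∏ b : Fin m,
        (x ((S.1)ᶜ.orderEmbOfFin (compl_card S.1 ((Finset.mem_powersetCard.mp S.2).2)) b) -
            x (S.1.orderEmbOfFin ((Finset.mem_powersetCard.mp S.2).2) a)) ^ ((d : ℤ) - 1)

/-- The generator `ψ_{2i+1}`: the one-variable polynomial `x^i`. -/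
def psi (i : ℕ) : (Fin 1 → ℚ) → ℚ := fun x => x 0 ^ i

/-- Iterated shuffle product (for `d = 0`) of the generators with exponents given by a list. -/
def psiProd : (l : List ℕ) → (Fin l.length → ℚ) → ℚ
  | [] => fun _ => 1
  | i :: tl => fun x =>
      shuffleMul 0 (psi i) (psiProd tl)
        (fun j => x (finCongr (Nat.add_comm 1 tl.length) j))

lemma prod_bij_succAbove {m : ℕ} (k : Fin (m + 1)) (s : Finset (Fin m))
    (t : Finset (Fin (m + 1))) (g : Fin (m + 1) → ℚ)
    (h1 : ∀ i ∈ s, k.succAbove i ∈ t)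
    (h2 : ∀ j ∈ t, ∃ i ∈ s, k.succAbove i = j) :
    ∏ j ∈ t, g j = ∏ i ∈ s, g (k.succAbove i) :=
  (Finset.prod_bij (fun i _ => k.succAbove i) h1
    (fun _ _ _ _ h => Fin.succAbove_right_injective h)
    (fun j hj => by obtain ⟨i, hi, hij⟩ := h2 j hj; exact ⟨i, hi, hij⟩)
    (fun _ _ => rfl)).symm

lemma prod_pairs {n : ℕ} (f : Fin n × Fin n → ℚ) :
    ∏ p ∈ Finset.univ.filter (fun p : Fin n × Fin n => p.1 < p.2), f p =
    ∏ i, ∏ j ∈ Finset.Ioi i, f (i, j) := by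
  rw [Finset.prod_sigma' Finset.univ (fun i => Finset.Ioi i) (fun i j => f (i, j))]
  refine (Finset.prod_bij (fun (p : Fin n × Fin n) _ => (⟨p.1, p.2⟩ : Σ _ : Fin n, Fin n)) ?_ ?_ ?_ ?_)
  · rintro ⟨a, b⟩ h
    simp only [Finset.mem_filter] at h
    simp [Finset.mem_sigma, Finset.mem_Ioi, h.2]
  · rintro ⟨a, b⟩ h ⟨c, d⟩ h' hh
    simp only [Sigma.mk.inj_iff, heq_eq_eq] at hh
    simp [Prod.ext_iff, hh.1, hh.2]
  · rintro ⟨a, b⟩ h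
    simp only [Finset.mem_sigma, Finset.mem_Ioi] at h
    exact ⟨(a, b), by simp [h.2], rfl⟩
  · intros; rfl

lemma prod_pairs' {n : ℕ} (x : Fin n → ℚ) :
    ∏ p ∈ Finset.univ.filter (fun p : Fin n × Fin n => p.1 < p.2), (x p.2 - x p.1) =
    ∏ i, ∏ j ∈ Finset.Ioi i, (x j - x i) :=
  prod_pairs (fun p => x p.2 - x p.1)

lemma card_succAbove_lt {m : ℕ} (k : Fin (m + 1)) :
    (Finset.univ.filter (fun i : Fin m => k.succAbove i < k)).card = (k : ℕ) := by
  have hiff : ∀ i : Fin m, k.succAbove i < k ↔ (i : ℕ) < (k : ℕ) := by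
    intro i
    rw [Fin.succAbove_lt_iff_castSucc_lt]
    simp [Fin.lt_def]
  rw [← Fintype.card_fin (k : ℕ), ← Finset.card_univ]
  refine Finset.card_bij (fun a ha => ⟨(a : ℕ), (hiff a).mp (by simpa using ha)⟩) (by simp)
    (fun a ha b hb h => by simpa [Fin.ext_iff] using congrArg Fin.val h) ?_
  rintro ⟨b, hb⟩ _
  refine ⟨⟨b, lt_of_lt_of_le hb (by omega)⟩, ?_, rfl⟩
  simp only [Finset.mem_filter, Finset.mem_univ, true_and]
  exact (hiff _).mpr hb

lemma erase_bij {m : ℕ} (x : Fin (m + 1) → ℚ) (k : Fin (m + 1)) (i : Fin m) :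
    ∏ j ∈ (Finset.Ioi (k.succAbove i)).erase k, (x j - x (k.succAbove i)) =
    ∏ j ∈ Finset.Ioi i, (x (k.succAbove j) - x (k.succAbove i)) := by
  refine prod_bij_succAbove k _ _ _ ?_ ?_
  · intro j hj
    simp only [Finset.mem_Ioi] at hj
    simp [Finset.mem_erase, Fin.succAbove_ne, Fin.succAbove_lt_succAbove_iff, hj]
  · intro j hj
    simp only [Finset.mem_erase, Finset.mem_Ioi] at hj
    obtain ⟨z, hz⟩ := Fin.exists_succAbove_eq hj.1
    refine ⟨z, ?_, hz⟩
    simp only [Finset.mem_Ioi]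
    rw [← Fin.succAbove_lt_succAbove_iff (p := k), hz]
    exact hj.2

lemma inner_split {m : ℕ} (x : Fin (m + 1) → ℚ) (k : Fin (m + 1)) (i : Fin m) :
    ∏ j ∈ Finset.Ioi (k.succAbove i), (x j - x (k.succAbove i)) =
    (if k.succAbove i < k then (x k - x (k.succAbove i)) else 1) *
      ∏ j ∈ Finset.Ioi i, (x (k.succAbove j) - x (k.succAbove i)) := by
  rw [← erase_bij x k i]
  by_cases h : k.succAbove i < k
  · rw [if_pos h, ← Finset.mul_prod_erase _ _ (Finset.mem_Ioi.mpr h)]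
  · rw [if_neg h, one_mul, Finset.erase_eq_of_notMem]
    simp only [Finset.mem_Ioi]
    exact h

lemma ioi_k_prod {m : ℕ} (x : Fin (m + 1) → ℚ) (k : Fin (m + 1)) :
    ∏ j ∈ Finset.Ioi k, (x j - x k) =
    ∏ i : Fin m, (if k < k.succAbove i then (x (k.succAbove i) - x k) else 1) := by
  rw [← Finset.prod_filter]
  refine prod_bij_succAbove k _ _ _ ?_ ?_
  · intro j hj
    simp only [Finset.mem_filter, Finset.mem_univ, true_and] at hj
    simpa using hj
  · intro j hj
    simp only [Finset.mem_Ioi] at hj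
    obtain ⟨z, hz⟩ := Fin.exists_succAbove_eq (ne_of_gt hj)
    exact ⟨z, by simp [hz, hj], hz⟩

lemma vdm_split {m : ℕ} (x : Fin (m + 1) → ℚ) (k : Fin (m + 1)) :
    (∏ i, ∏ j ∈ Finset.Ioi i, (x j - x i)) =
    (-1) ^ (k : ℕ) * (∏ b : Fin m, (x (k.succAbove b) - x k)) *
    ∏ i, ∏ j ∈ Finset.Ioi i, (x (k.succAbove j) - x (k.succAbove i)) := by
  rw [Fin.prod_univ_succAbove (fun i => ∏ j ∈ Finset.Ioi i, (x j - x i)) k]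
  simp only [inner_split x k]
  rw [Finset.prod_mul_distrib, ioi_k_prod x k]
  have h1 : (∏ i : Fin m, (if k < k.succAbove i then (x (k.succAbove i) - x k) else 1)) *
      (∏ i : Fin m, (if k.succAbove i < k then (x k - x (k.succAbove i)) else 1)) =
      (-1) ^ (k : ℕ) * ∏ b : Fin m, (x (k.succAbove b) - x k) := by
    rw [← Finset.prod_mul_distrib]
    have heach : ∀ i : Fin m,
        (if k < k.succAbove i then (x (k.succAbove i) - x k) else 1) *
        (if k.succAbove i < k then (x k - x (k.succAbove i)) else 1) =
        (if k.succAbove i < k then (-1 : ℚ) else 1) * (x (k.succAbove i) - x k) := by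
      intro i
      rcases lt_or_gt_of_ne (Fin.succAbove_ne k i) with h | h
      · rw [if_neg (not_lt_of_gt h), if_pos h, if_pos h]; ring
      · rw [if_pos h, if_neg (not_lt_of_gt h), if_neg (not_lt_of_gt h)]; ring
    rw [Finset.prod_congr rfl (fun i _ => heach i), Finset.prod_mul_distrib]
    congr 1
    rw [Finset.prod_ite, Finset.prod_const, Finset.prod_const, one_pow, mul_one,
      card_succAbove_lt]
  rw [← mul_assoc, h1]


lemma shuffleMul_psi {m : ℕ} (i : ℕ) (f : (Fin m → ℚ) → ℚ) (x : Fin (m + 1) → ℚ) :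
    shuffleMul 0 (psi i) f (fun j => x (finCongr (Nat.add_comm 1 m) j)) =
    ∑ k : Fin (m + 1), x k ^ i * f (fun b => x (k.succAbove b)) *
      ∏ b : Fin m, (x (k.succAbove b) - x k)⁻¹ := by
  classical
  set c := finCongr (Nat.add_comm 1 m) with hc
  unfold shuffleMul
  rw [Finset.attach_eq_univ]
  have hmem : ∀ k : Fin (m + 1),
      ({c.symm k} : Finset (Fin (1 + m))) ∈
        Finset.powersetCard 1 (Finset.univ : Finset (Fin (1 + m))) := by
    intro k
    simp [Finset.mem_powersetCard]
  rw [← Equiv.sum_comp (Equiv.ofBijective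
    (fun k : Fin (m + 1) =>
      (⟨{c.symm k}, hmem k⟩ : {S // S ∈ Finset.powersetCard 1 (Finset.univ : Finset (Fin (1 + m)))}))
    ⟨fun a b hab => by
      have := congrArg (fun S => S.1) hab
      simp only [Finset.singleton_inj] at this
      exact c.symm.injective this,
     by
      rintro ⟨S, hS⟩
      have hcard : S.card = 1 := (Finset.mem_powersetCard.mp hS).2
      obtain ⟨a, ha⟩ := Finset.card_eq_one.mp hcard
      exact ⟨c a, by simp [ha]⟩⟩)]
  apply Finset.sum_congr rfl
  intro k _
  have hScard : ({c.symm k} : Finset (Fin (1 + m))).card = 1 := Finset.card_singleton _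
  -- the orderEmbOfFin of the singleton
  have h1 : ∀ (h : ({c.symm k} : Finset (Fin (1 + m))).card = 1) (a : Fin 1),
      ({c.symm k} : Finset (Fin (1 + m))).orderEmbOfFin h a = c.symm k := by
    intro h a
    exact Finset.orderEmbOfFin_singleton _ a
  -- the orderEmbOfFin of the complement
  have h2 : ∀ (h : (({c.symm k} : Finset (Fin (1 + m)))ᶜ).card = m) (b : Fin m),
      (({c.symm k} : Finset (Fin (1 + m)))ᶜ).orderEmbOfFin h b = c.symm (k.succAbove b) := by
    intro h b
    have := Finset.orderEmbOfFin_unique h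
      (f := fun b : Fin m => c.symm (k.succAbove b))
      (fun b => by
        simp only [Finset.mem_compl, Finset.mem_singleton]
        intro hcon
        exact Fin.succAbove_ne k b (c.symm.injective hcon))
      (fun a b hab => by
        have h' : k.succAbove a < k.succAbove b := Fin.strictMono_succAbove k hab
        rw [Fin.lt_def] at h' ⊢
        exact h')
    exact (congrFun this b).symm
  dsimp only [Equiv.ofBijective, Equiv.coe_fn_mk]
  simp only [h1, Equiv.apply_symm_apply, psi, Fin.prod_univ_one]
  norm_num
  congr 1
  · congr 1
    apply congrArg
    funext b
    exact congrArg x ((congrArg c (h2 (compl_card _ hScard) b)).trans (c.apply_symm_apply _))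
  · congr 1
    apply Finset.prod_congr rfl
    intro b _
    exact congrArg (· - x k) (congrArg x ((congrArg c (h2 (compl_card _ hScard) b)).trans (c.apply_symm_apply _)))


lemma key : ∀ (l : List ℕ) (x : Fin l.length → ℚ), Function.Injective x →
    psiProd l x *
      ∏ p ∈ Finset.univ.filter (fun p : Fin l.length × Fin l.length => p.1 < p.2),
        (x p.2 - x p.1) =
      (Matrix.of fun a b => x a ^ l.get b).det
  | [], x, hx => by
      simp [psiProd, Matrix.det_isEmpty]
  | i :: tl, x, hx => by
      suffices h : ∀ (y : Fin (tl.length + 1) → ℚ), Function.Injective y →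
          psiProd (i :: tl) y *
            ∏ p ∈ Finset.univ.filter
              (fun p : Fin (tl.length + 1) × Fin (tl.length + 1) => p.1 < p.2),
              (y p.2 - y p.1) =
          (Matrix.of fun a b : Fin (tl.length + 1) => y a ^ (i :: tl).get b).det by
        exact h x hx
      clear x hx
      intro x hx
      have hps : psiProd (i :: tl) x =
          shuffleMul 0 (psi i) (psiProd tl)
            (fun j => x (finCongr (Nat.add_comm 1 tl.length) j)) := rfl
      rw [prod_pairs' x, hps, shuffleMul_psi i (psiProd tl) x, Finset.sum_mul,
        Matrix.det_succ_column_zero]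
      apply Finset.sum_congr rfl
      intro k _
      have hinj' : Function.Injective (fun b : Fin tl.length => x (k.succAbove b)) :=
        hx.comp Fin.succAbove_right_injective
      have hIH := key tl (fun b => x (k.succAbove b)) hinj'
      rw [prod_pairs' (fun b => x (k.succAbove b))] at hIH
      have hQ : (∏ b : Fin tl.length, (x (k.succAbove b) - x k)) ≠ 0 := by
        apply Finset.prod_ne_zero_iff.mpr
        intro b _
        exact sub_ne_zero.mpr (fun hcon => Fin.succAbove_ne k b (hx hcon))
      have hsub : ((Matrix.of fun a b : Fin (tl.length + 1) => x a ^ (i :: tl).get b).submatrix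
          k.succAbove Fin.succ) =
          Matrix.of fun a b => (fun c : Fin tl.length => x (k.succAbove c)) a ^ tl.get b := rfl
      rw [vdm_split x k, Finset.prod_inv_distrib, hsub, ← hIH]
      have hM0 : (Matrix.of fun a b : Fin (tl.length + 1) => x a ^ (i :: tl).get b) k 0 = x k ^ i := rfl
      rw [hM0]
      field_simp

/-- `ψ_{2i_1+1}·…·ψ_{2i_n+1} = s_λ` in bialternant (denominator-free) form:
the product of generators with strictly increasing exponents `e 0 < e 1 < … < e (n-1)`,
multiplied by the Vandermonde `∏_{a<b}(x_b - x_a)`, equals `det (x_a^{e b})`. -/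
theorem stmt2 {n : ℕ} (e : Fin n → ℕ) (he : StrictMono e)
    (x : Fin n → ℚ) (hx : Function.Injective x) :
    psiProd (List.ofFn e) (fun i => x (finCongr (List.length_ofFn : (List.ofFn e).length = n) i)) *
        ∏ p ∈ Finset.univ.filter (fun p : Fin n × Fin n => p.1 < p.2), (x p.2 - x p.1) =
      (Matrix.of fun a b : Fin n => x a ^ e b).det := by
  set c := finCongr (List.length_ofFn : (List.ofFn e).length = n) with hc
  have hx' : Function.Injective (fun i => x (c i)) :=
    hx.comp c.injective
  have hkey := key (List.ofFn e) (fun i => x (c i)) hx'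
  have hV : ∏ p ∈ Finset.univ.filter
        (fun p : Fin (List.ofFn e).length × Fin (List.ofFn e).length => p.1 < p.2),
        (x (c p.2) - x (c p.1)) =
      ∏ p ∈ Finset.univ.filter (fun p : Fin n × Fin n => p.1 < p.2), (x p.2 - x p.1) := by
    refine Finset.prod_bij (fun p _ => (c p.1, c p.2)) ?_ ?_ ?_ ?_
    · rintro ⟨a, b⟩ h
      simp only [Finset.mem_filter, Finset.mem_univ, true_and] at h ⊢
      rw [Fin.lt_def] at h ⊢
      exact h
    · rintro ⟨a, b⟩ _ ⟨a', b'⟩ _ hh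
      simp only [Prod.mk.injEq] at hh
      simp [Prod.ext_iff, c.injective hh.1, c.injective hh.2]
    · rintro ⟨a, b⟩ h
      simp only [Finset.mem_filter, Finset.mem_univ, true_and] at h
      refine ⟨(c.symm a, c.symm b), ?_, by simp⟩
      simp only [Finset.mem_filter, Finset.mem_univ, true_and]
      rw [Fin.lt_def] at h ⊢
      exact h
    · intros; rfl
  have hD : (Matrix.of fun a b => x (c a) ^ (List.ofFn e).get b).det =
      (Matrix.of fun a b : Fin n => x a ^ e b).det := by
    have : (Matrix.of fun a b => x (c a) ^ (List.ofFn e).get b) =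
        (Matrix.of fun a b : Fin n => x a ^ e b).submatrix c c := by
      ext a b
      simp only [Matrix.of_apply, Matrix.submatrix_apply, List.get_ofFn]
      rfl
    rw [this, Matrix.det_submatrix_equiv_self]
  rw [← hV, hkey, hD]

end

end Stmt2
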